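/- arXiv:1401.0326 — 2 statements merged into one kernel-verified Lean document; each statement's English description precedes it below -/
import Mathlib

section
/- Let α > 3/4 and let C₀ = C₀(α) be the constant from the randomized collision estimate (so that ‖[B_{j,k+1}]^ω γ‖_{L²(Ω;H^α)} ≤ C₀‖γ‖_{H^α} for deterministic γ). Fix k ∈ ℕ and j ∈ {1,…,k}. If γ^{(k+1)} is a density matrix of order k+1 depending measurably on ω* ∈ Ω* but independent of the coordinate ω_{k+1} (i.e. p*-a.e. equal to a function of (ω_ℓ)_{ℓ≠k+1} only), then ‖[B_{j,k+1}]^{ω_{k+1}} γ^{(k+1)}‖_{L²(Ω*; H^α(Λ^k×Λ^k))} ≤ C₀ ‖γ^{(k+1)}‖_{L²(Ω*; H^α(Λ^{k+1}×Λ^{k+1}))}, and hence ‖[B^{(k+1)}]^{ω_{k+1}} γ^{(k+1)}‖_{L²(Ω*; H^α(Λ^k×Λ^k))} ≤ C₀ · k · ‖γ^{(k+1)}‖_{L²(Ω*; H^α(Λ^{k+1}×Λ^{k+1}))}. Moreover, if Σ^{ω*} = (σ^{(k)})_k is a sequence of density matrices depending on ω* such that for every k ≥ 1 the component σ^{(k+1)}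 is independent of ω_{k+1}, then for all 0 < ξ₀ < ξ there is a constant depending only on ξ, ξ₀, α with ‖[B̂]^{ω*} Σ^{ω*}‖_{L²(Ω*)ℋ_{ξ₀}^α} ≲_{ξ,ξ₀,α} ‖Σ^{ω*}‖_{L²(Ω*)ℋ_ξ^α}. -/
open MeasureTheory ENNReal

noncomputable section

namespace GP

/-- Frequencies in ℤ³. -/
abbrev Z3 : Type := Fin 3 → ℤ

/-- The squared magnitude |ζ|² of a frequency. -/
def nsq (ζ : Z3) : ℤ := ∑ i, (ζ i) ^ 2

/-- The Japanese bracket ⟨ζ⟩ = √(1 + |ζ|²). -/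
def jb (ζ : Z3) : ℝ := Real.sqrt (1 + (nsq ζ : ℝ))

/-- A density matrix of order `k` on 𝕋³, represented by its Fourier coefficients. -/
abbrev DM (k : ℕ) : Type := (Fin k → Z3) → (Fin k → Z3) → ℂ

/-- The Sobolev weight ∏_j ⟨ξ_j⟩^{2α} ⟨ξ'_j⟩^{2α}. -/
def wt (α : ℝ) {k : ℕ} (a b : Fin k → Z3) : ℝ :=
  ∏ j, (jb (a j) ^ (2 * α) * jb (b j) ^ (2 * α))

/-- The squared H^α norm of a density matrix (with values in ℝ≥0∞). -/
def hsq (α : ℝ) {k : ℕ} (γ : DM k) : ℝ≥0∞ :=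
  ∑' q : (Fin k → Z3) × (Fin k → Z3),
    ENNReal.ofReal (wt α q.1 q.2) * (‖γ q.1 q.2‖₊ : ℝ≥0∞) ^ 2

/-- The H^α norm of a density matrix. -/
def hnorm (α : ℝ) {k : ℕ} (γ : DM k) : ℝ≥0∞ := hsq α γ ^ (1 / 2 : ℝ)

/-- The free evolution U^{(k)}(t), as a Fourier multiplier. -/
def freeEv (t : ℝ) {k : ℕ} (γ : DM k) : DM k := fun a b =>
  Complex.exp (-(Complex.I * (t : ℂ) *
      ((((∑ j, nsq (a j)) - (∑ j, nsq (b j)) : ℤ)) : ℂ))) * γ a b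

variable {Ω W : Type}

/-- The randomized collision operator [B⁺_{j,k+1}]^ω on the Fourier side. -/
def Bp (h : Z3 → Ω → ℝ) (ω : Ω) {k : ℕ} (j : Fin k) (γ : DM (k + 1)) : DM k :=
  fun a b => ∑' η : Z3, ∑' η' : Z3,
    ((h (a j) ω * h (a j - η + η') ω * h η ω * h η' ω : ℝ) : ℂ) *
      γ (Fin.snoc (Function.update a j (a j - η + η')) η) (Fin.snoc b η')

/-- The randomized collision operator [B⁻_{j,k+1}]^ω on the Fourier side. -/
def Bm (h : Z3 → Ω → ℝ) (ω : Ω) {k : ℕ} (j : Fin k) (γ : DM (k + 1)) : DM k :=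
  fun a b => ∑' η : Z3, ∑' η' : Z3,
    ((h (b j) ω * h (b j - η' + η) ω * h η ω * h η' ω : ℝ) : ℂ) *
      γ (Fin.snoc a η) (Fin.snoc (Function.update b j (b j - η' + η)) η')

/-- [B_{j,k+1}]^ω = [B⁺_{j,k+1}]^ω − [B⁻_{j,k+1}]^ω. -/
def Bc (h : Z3 → Ω → ℝ) (ω : Ω) {k : ℕ} (j : Fin k) (γ : DM (k + 1)) : DM k :=
  Bp h ω j γ - Bm h ω j γ

/-- The full randomized collision operator [B^{(k+1)}]^ω = Σ_{j=1}^k [B_{j,k+1}]^ω. -/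
def Bfull (h : Z3 → Ω → ℝ) (ω : Ω) {k : ℕ} (γ : DM (k + 1)) : DM k :=
  ∑ j : Fin k, Bc h ω j γ

/-- `(h ζ)` is a family of independent random variables each taking the values
`1` and `-1` with probability `1/2`. -/
def BernoulliFamily [MeasurableSpace Ω] (p : Measure Ω) (h : Z3 → Ω → ℝ) : Prop :=
  (∀ ζ : Z3, Measurable (h ζ)) ∧
    ProbabilityTheory.iIndepFun h p ∧
    ∀ ζ : Z3, p {ω | h ζ ω = 1} = 1 / 2 ∧ p {ω | h ζ ω = -1} = 1 / 2

/-- `μ` is an infinite product of copies of `p`: the coordinates are independent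
and each has law `p` (Kakutani/Kolmogorov product measure). -/
def ProductLaw [MeasurableSpace Ω] (p : Measure Ω) (μ : Measure (ℕ → Ω)) : Prop :=
  IsProbabilityMeasure μ ∧
    (∀ n : ℕ, μ.map (fun w => w n) = p) ∧
    ProbabilityTheory.iIndepFun
      (fun (n : ℕ) (w : ℕ → Ω) => w n) μ

/-- The L²(μ; H^α) norm of a random density matrix. -/
def l2H [MeasurableSpace W] (μ : Measure W) (α : ℝ) {k : ℕ} (γ : W → DM k) : ℝ≥0∞ :=
  (∫⁻ w, hsq α (γ w) ∂μ) ^ (1 / 2 : ℝ)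

/-- A sequence of density matrices; the component of order `k` is `Γ k`. -/
abbrev Seq : Type := ∀ k : ℕ, DM k

/-- The ℋ_ξ^α norm: Σ_{k ≥ 1} ξ^k ‖γ^{(k)}‖_{H^α}. -/
def hseq (α ξ : ℝ) (Γ : Seq) : ℝ≥0∞ :=
  ∑' k : ℕ, ENNReal.ofReal (ξ ^ (k + 1)) * hnorm α (Γ (k + 1))

/-- The L²(μ)ℋ_ξ^α norm: Σ_{k ≥ 1} ξ^k ‖γ^{(k)}‖_{L²(μ; H^α)}. -/
def l2seq [MeasurableSpace W] (μ : Measure W) (α ξ : ℝ) (Γ : W → Seq) : ℝ≥0∞ :=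
  ∑' k : ℕ, ENNReal.ofReal (ξ ^ (k + 1)) * l2H μ α (fun w => Γ w (k + 1))

/-- The L^∞_{t∈[0,T]} L²(μ) ℋ_ξ^α norm (essential supremum in time). -/
def tl2seq [MeasurableSpace W] (μ : Measure W) (α ξ T : ℝ) (Γ : ℝ → W → Seq) : ℝ≥0∞ :=
  essSup (fun t => l2seq μ α ξ (Γ t)) (volume.restrict (Set.Icc (0 : ℝ) T))

/-- The free evolution acting on sequences: (U(t)Γ)^{(k)} = U^{(k)}(t) γ^{(k)}. -/
def UAll (t : ℝ) (Γ : Seq) : Seq := fun k => freeEv t (Γ k)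

/-- The independently randomized operator [B̂]^{ω*}: the component of order k is
[B^{(k+1)}]^{ω_{k+1}} γ^{(k+1)}. -/
def BhatI (h : Z3 → Ω → ℝ) (w : ℕ → Ω) (Γ : Seq) : Seq :=
  fun k => Bfull h (w (k + 1)) (Γ (k + 1))

/-- The dependently randomized operator [B̂]^ω (the same ω at every level). -/
def BhatD (h : Z3 → Ω → ℝ) (ω : Ω) (Γ : Seq) : Seq := fun k => Bfull h ω (Γ (k + 1))

/-- Componentwise time integral ∫_0^t Y(s) ds of a one-parameter family of sequences. -/
def intComp (Y : ℝ → Seq) (t : ℝ) : Seq := fun k a b => ∫ s in (0 : ℝ)..t, Y s k a b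

/-- The collision-operator family of the independently randomized hierarchy. -/
def BopI (h : Z3 → Ω → ℝ) (w : ℕ → Ω) : ∀ k : ℕ, DM (k + 1) → DM k :=
  fun k γ => Bfull h (w (k + 1)) γ

/-- The collision-operator family of the dependently randomized hierarchy. -/
def BopD (h : Z3 → Ω → ℝ) (ω : Ω) : ∀ k : ℕ, DM (k + 1) → DM k :=
  fun _ γ => Bfull h ω γ

/-- The iterated Duhamel term `Duh_j(Γ0)^{(k)}(t)`:
`Duh_0^{(k)}(t) = U^{(k)}(t) γ₀^{(k)}` and
`Duh_{j+1}^{(k)}(t) = (−i) ∫_0^t U^{(k)}(t−s) B^{(k+1)} (Duh_j^{(k+1)}(s)) ds`. -/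
def Duh (Bop : ∀ k : ℕ, DM (k + 1) → DM k) (Γ0 : Seq) : ℕ → ∀ k : ℕ, ℝ → DM k
  | 0 => fun k t => freeEv t (Γ0 k)
  | j + 1 => fun k t a b =>
      (-Complex.I) *
        ∫ s in (0 : ℝ)..t, (freeEv (t - s) (Bop k (Duh Bop Γ0 j (k + 1) s))) a b

/-- The explicit solution of the truncated hierarchy:
`γ_N^{(k)}(t) = Σ_{j=0}^{N−k} Duh_j(Γ0)^{(k)}(t)` for k ≤ N, and 0 for k > N. -/
def trunc (Bop : ∀ k : ℕ, DM (k + 1) → DM k) (Γ0 : Seq) (N : ℕ) (t : ℝ) : Seq :=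
  fun k => if k ≤ N then ∑ j ∈ Finset.range (N + 1 - k), Duh Bop Γ0 j k t else 0

/-- The projection P_{>N}. -/
def tailP (Γ : Seq) (N : ℕ) : Seq := fun k => if N < k then Γ k else 0

/-- `f` agrees μ-a.e. with a function not depending on the n-th coordinate. -/
def IndepOf [MeasurableSpace Ω] (μ : Measure (ℕ → Ω)) (n : ℕ) {β : Type}
    (f : (ℕ → Ω) → β) : Prop :=
  ∃ g : (ℕ → Ω) → β, (∀ᵐ w ∂μ, f w = g w) ∧
    ∀ w w' : ℕ → Ω, (∀ m : ℕ, m ≠ n → w m = w' m) → g w = g w'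

/-- The non-resonant class 𝒩 with respect to the regularity exponent α:
the Fourier coefficients vanish unless |ξ₁| > ⋯ > |ξ_m| > |ξ'₁| > ⋯ > |ξ'_m|,
and ‖σ^{(m)}‖_{H^α} ≤ C^m. -/
def NonRes (α : ℝ) (Γ : Seq) : Prop :=
  (∀ (m : ℕ) (a b : Fin m → Z3), Γ m a b ≠ 0 →
      (∀ i i' : Fin m, i < i' → nsq (a i') < nsq (a i)) ∧
      (∀ i i' : Fin m, i < i' → nsq (b i') < nsq (b i)) ∧
      ∀ i i' : Fin m, nsq (b i') < nsq (a i)) ∧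
  ∃ C : ℝ, 0 < C ∧ ∀ m : ℕ, 1 ≤ m → hnorm α (Γ m) ≤ ENNReal.ofReal (C ^ m)

/-- The generalized collision operator [B⁺_{ℓ,n}]^ω acting on density matrices of
order m+1 by contracting the n-th variable pair onto the ℓ-th unprimed variable
(0-based indices; variable labels are preserved). -/
def gBp (h : Z3 → Ω → ℝ) (ω : Ω) {m : ℕ} (ℓ n : ℕ) (γ : DM (m + 1)) : DM m :=
  if hn : n < m + 1 then
    if hl : ℓ < m then
      fun a b => ∑' η : Z3, ∑' η' : Z3,
        ((h (a ⟨ℓ, hl⟩) ω * h (a ⟨ℓ, hl⟩ - η + η') ω * h η ω * h η' ω : ℝ) : ℂ) *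
          γ (Fin.insertNth ⟨n, hn⟩ η (Function.update a ⟨ℓ, hl⟩ (a ⟨ℓ, hl⟩ - η + η')))
            (Fin.insertNth ⟨n, hn⟩ η' b)
    else 0
  else 0

/-- The generalized collision operator [B⁻_{ℓ,n}]^ω, acting on the primed variables. -/
def gBm (h : Z3 → Ω → ℝ) (ω : Ω) {m : ℕ} (ℓ n : ℕ) (γ : DM (m + 1)) : DM m :=
  if hn : n < m + 1 then
    if hl : ℓ < m then
      fun a b => ∑' η : Z3, ∑' η' : Z3,
        ((h (b ⟨ℓ, hl⟩) ω * h (b ⟨ℓ, hl⟩ - η' + η) ω * h η ω * h η' ω : ℝ) : ℂ) *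
          γ (Fin.insertNth ⟨n, hn⟩ η a)
            (Fin.insertNth ⟨n, hn⟩ η' (Function.update b ⟨ℓ, hl⟩ (b ⟨ℓ, hl⟩ - η' + η)))
    else 0
  else 0

/-- Signed generalized collision operator [B^±_{ℓ,n}]^ω; `true` is the + sign. -/
def gB (h : Z3 → Ω → ℝ) (ω : Ω) {m : ℕ} (s : Bool) (ℓ n : ℕ) (γ : DM (m + 1)) : DM m :=
  if s then gBp h ω ℓ n γ else gBm h ω ℓ n γ

/-- The composition
`U^{(k)}(t₁−t₂)[B^±_{ℓ₁,n₁}]^ω U^{(k+1)}(t₂−t₃)[B^±_{ℓ₂,n₂}]^ω ⋯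
 U^{(k+j−1)}(t_j−t_{j+1})[B^±_{ℓ_j,n_j}]^ω σ^{(k+j)}`,
where `ts i` plays the role of `t_{i+1}`, `ℓs i`, `ns i` those of `ℓ_{i+1}`, `n_{i+1}`
(0-based), and `ss i` is the sign of the (i+1)-st collision operator. -/
def comp (h : Z3 → Ω → ℝ) (ω : Ω) (ℓs ns : ℕ → ℕ) (ss : ℕ → Bool) (ts : ℕ → ℝ) :
    (j : ℕ) → (k : ℕ) → DM (k + j) → DM k
  | 0, _, σ => σ
  | j + 1, k, σ =>
      comp h ω ℓs ns ss ts j k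
        (freeEv (ts j - ts (j + 1)) (gB h ω (ss j) (ℓs j) (ns j) σ))

/-- The iterated Duhamel expression of the dependently randomized hierarchy:
`EExp_j^{(k)}(t) = ∫_0^t⋯∫_0^{t_{j−1}} [B^{(k+1)}]^ω U^{(k+1)}(t−t₁) [B^{(k+2)}]^ω ⋯
[B^{(k+j+1)}]^ω U^{(k+j+1)}(t_j) σ^{(k+j+1)} dt_j ⋯ dt₁`. -/
def EExp (h : Z3 → Ω → ℝ) (ω : Ω) (Γ : Seq) : ℕ → ∀ k : ℕ, ℝ → DM k
  | 0 => fun k t => Bfull h ω (freeEv t (Γ (k + 1)))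
  | j + 1 => fun k t a b =>
      ∫ s in (0 : ℝ)..t, (Bfull h ω (freeEv (t - s) (EExp h ω Γ j (k + 1) s))) a b

section AuxLemmas

variable {Ω : Type} [MeasurableSpace Ω]

/-- Tonelli-type inequality for arbitrary (not necessarily measurable) functions. -/
lemma aux_lintegral_prod_le {β : Type} [MeasurableSpace β] (μ : Measure Ω) (ν : Measure β)
    [SFinite ν] (f : Ω × β → ℝ≥0∞) :
    ∫⁻ z, f z ∂(μ.prod ν) ≤ ∫⁻ x, ∫⁻ y, f (x, y) ∂ν ∂μ := by
  rw [← iSup_lintegral_measurable_le_eq_lintegral f]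
  refine iSup_le fun g => iSup_le fun hg => iSup_le fun hgf => ?_
  calc ∫⁻ z, g z ∂(μ.prod ν) = ∫⁻ x, ∫⁻ y, g (x, y) ∂ν ∂μ :=
        MeasureTheory.lintegral_prod g hg.aemeasurable
    _ ≤ ∫⁻ x, ∫⁻ y, f (x, y) ∂ν ∂μ :=
        lintegral_mono fun x => lintegral_mono fun y => hgf (x, y)

/-- Measurability of a pointwise `tsum` of complex-valued measurable functions over `ℕ`. -/
lemma aux_measurable_tsum_nat {F : ℕ → Ω → ℂ} (hF : ∀ n, Measurable (F n)) :
    Measurable fun ω => ∑' n, F n ω := by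
  classical
  set S : Set Ω := {ω | Summable fun n => F n ω} with hSdef
  have hSm : MeasurableSet S := by
    have hSeq : S = ⋂ k : ℕ, ⋃ s : Finset ℕ, ⋂ t : Finset ℕ, ⋂ _ : Disjoint t s,
        {ω | ‖∑ i ∈ t, F i ω‖ < 1 / ((k : ℝ) + 1)} := by
      ext ω
      simp only [hSdef, Set.mem_setOf_eq, Set.mem_iInter, Set.mem_iUnion]
      constructor
      · intro hsum k
        rcases summable_iff_vanishing_norm.1 hsum (1 / ((k : ℝ) + 1)) (by positivity) with ⟨s, hs⟩
        exact ⟨s, fun t ht => hs t ht⟩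
      · intro hcond
        refine summable_iff_vanishing_norm.2 fun ε hε => ?_
        obtain ⟨k, hk⟩ := exists_nat_one_div_lt hε
        rcases hcond k with ⟨s, hs⟩
        exact ⟨s, fun t ht => (hs t ht).trans hk⟩
    rw [hSeq]
    refine MeasurableSet.iInter fun k => MeasurableSet.iUnion fun s =>
      MeasurableSet.iInter fun t => MeasurableSet.iInter fun _ => ?_
    exact measurableSet_lt ((Finset.measurable_sum t fun i _ => hF i).norm) measurable_const
  have hQ : ∀ n : ℕ, Measurable (S.indicator fun ω => ∑ i ∈ Finset.range n, F i ω) :=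
    fun n => (Finset.measurable_sum _ fun i _ => hF i).indicator hSm
  apply measurable_of_tendsto_metrizable hQ
  rw [tendsto_pi_nhds]
  intro ω
  by_cases hω : ω ∈ S
  · have : ∀ n : ℕ, (S.indicator fun ω => ∑ i ∈ Finset.range n, F i ω) ω
        = ∑ i ∈ Finset.range n, F i ω := fun n => Set.indicator_of_mem hω _
    simp only [this]
    exact (hω.hasSum).tendsto_sum_nat
  · have : ∀ n : ℕ, (S.indicator fun ω => ∑ i ∈ Finset.range n, F i ω) ω = 0 :=
      fun n => Set.indicator_of_notMem hω _
    simp only [this]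
    rw [tsum_eq_zero_of_not_summable hω]
    exact tendsto_const_nhds

lemma aux_measurable_tsum_Z3 {F : Z3 → Ω → ℂ} (hF : ∀ x, Measurable (F x)) :
    Measurable fun ω => ∑' x, F x ω := by
  have hinf : Infinite Z3 :=
    Infinite.of_injective (fun z : ℤ => (fun _ => z : Z3)) (fun a b hab => congrFun hab 0)
  letI : Encodable Z3 := Encodable.ofCountable Z3
  letI : Denumerable Z3 := Denumerable.ofEncodableOfInfinite Z3
  set e : ℕ ≃ Z3 := (Denumerable.eqv Z3).symm with he
  have : (fun ω => ∑' x, F x ω) = fun ω => ∑' n, F (e n) ω := by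
    funext ω
    exact (e.tsum_eq fun x => F x ω).symm
  rw [this]
  exact aux_measurable_tsum_nat fun n => hF (e n)

/-- `(x ^ (1/2)) ^ 2 = x` in `ℝ≥0∞`. -/
lemma aux_sqrt_sq (x : ℝ≥0∞) : (x ^ (1 / 2 : ℝ)) ^ (2 : ℕ) = x := by
  rw [← ENNReal.rpow_natCast (x ^ (1 / 2 : ℝ)) 2, ← ENNReal.rpow_mul]
  norm_num

/-- `(x ^ 2) ^ (1/2) = x` in `ℝ≥0∞`. -/
lemma aux_sq_sqrt (x : ℝ≥0∞) : (x ^ (2 : ℕ)) ^ (1 / 2 : ℝ) = x := by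
  rw [← ENNReal.rpow_natCast x 2, ← ENNReal.rpow_mul]
  norm_num

end AuxLemmas

section AuxLemmas2

variable {Ω : Type} [MeasurableSpace Ω]

lemma aux_measurable_Bc (h : Z3 → Ω → ℝ) (hh : ∀ ζ, Measurable (h ζ)) {k : ℕ} (j : Fin k)
    (γ : DM (k + 1)) (a b : Fin k → Z3) :
    Measurable fun ω => Bc h ω j γ a b := by
  have hp : Measurable fun ω => Bp h ω j γ a b := by
    apply aux_measurable_tsum_Z3
    intro η
    apply aux_measurable_tsum_Z3
    intro η'
    exact (Complex.measurable_ofReal.comp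
      ((((hh _).mul (hh _)).mul (hh _)).mul (hh _))).mul_const _
  have hm : Measurable fun ω => Bm h ω j γ a b := by
    apply aux_measurable_tsum_Z3
    intro η
    apply aux_measurable_tsum_Z3
    intro η'
    exact (Complex.measurable_ofReal.comp
      ((((hh _).mul (hh _)).mul (hh _)).mul (hh _))).mul_const _
  have : (fun ω => Bc h ω j γ a b) = fun ω => Bp h ω j γ a b - Bm h ω j γ a b := by
    funext ω; simp [Bc]
  rw [this]
  exact hp.sub hm

lemma aux_measurable_hsq_Bc (h : Z3 → Ω → ℝ) (hh : ∀ ζ, Measurable (h ζ)) (α : ℝ) {k : ℕ}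
    (j : Fin k) (γ : DM (k + 1)) :
    Measurable fun ω => hsq α (Bc h ω j γ) := by
  unfold hsq
  apply Measurable.ennreal_tsum
  intro q
  exact (((aux_measurable_Bc h hh j γ q.1 q.2).nnnorm.coe_nnreal_ennreal).pow_const 2).const_mul _

lemma aux_sq_norm_sum_le {k : ℕ} (z : Fin k → ℂ) :
    (‖∑ j, z j‖₊ : ℝ≥0∞) ^ (2 : ℕ) ≤ (k : ℝ≥0∞) * ∑ j, (‖z j‖₊ : ℝ≥0∞) ^ (2 : ℕ) := by
  have hre : ‖∑ j, z j‖ ^ (2 : ℕ) ≤ (k : ℝ) * ∑ j, ‖z j‖ ^ (2 : ℕ) := by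
    calc ‖∑ j, z j‖ ^ (2 : ℕ) ≤ (∑ j, ‖z j‖) ^ (2 : ℕ) :=
          pow_le_pow_left₀ (norm_nonneg _) (norm_sum_le _ _) 2
      _ ≤ ((Finset.univ : Finset (Fin k)).card : ℝ) * ∑ j, ‖z j‖ ^ (2 : ℕ) :=
          sq_sum_le_card_mul_sum_sq
      _ = (k : ℝ) * ∑ j, ‖z j‖ ^ (2 : ℕ) := by
          simp [Finset.card_univ]
  calc (‖∑ j, z j‖₊ : ℝ≥0∞) ^ (2 : ℕ) = ENNReal.ofReal (‖∑ j, z j‖ ^ (2 : ℕ)) := by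
        rw [ENNReal.ofReal_pow (norm_nonneg _), ofReal_norm, enorm_eq_nnnorm]
    _ ≤ ENNReal.ofReal ((k : ℝ) * ∑ j, ‖z j‖ ^ (2 : ℕ)) := ENNReal.ofReal_le_ofReal hre
    _ = (k : ℝ≥0∞) * ∑ j, (‖z j‖₊ : ℝ≥0∞) ^ (2 : ℕ) := by
        rw [ENNReal.ofReal_mul (by positivity), ENNReal.ofReal_natCast,
          ENNReal.ofReal_sum_of_nonneg (fun j _ => by positivity)]
        congr 1
        refine Finset.sum_congr rfl fun j _ => ?_
        rw [ENNReal.ofReal_pow (norm_nonneg _), ofReal_norm, enorm_eq_nnnorm]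

/-- Pointwise bound: `hsq(Bfull) ≤ k * ∑ j, hsq(Bc_j)`. -/
lemma aux_hsq_Bfull_le (h : Z3 → Ω → ℝ) (ω : Ω) (α : ℝ) {k : ℕ} (γ : DM (k + 1)) :
    hsq α (Bfull h ω γ) ≤ (k : ℝ≥0∞) * ∑ j : Fin k, hsq α (Bc h ω j γ) := by
  unfold hsq
  calc ∑' q : (Fin k → Z3) × (Fin k → Z3),
        ENNReal.ofReal (wt α q.1 q.2) * (‖Bfull h ω γ q.1 q.2‖₊ : ℝ≥0∞) ^ 2
      ≤ ∑' q : (Fin k → Z3) × (Fin k → Z3),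
        ENNReal.ofReal (wt α q.1 q.2) *
          ((k : ℝ≥0∞) * ∑ j : Fin k, (‖Bc h ω j γ q.1 q.2‖₊ : ℝ≥0∞) ^ 2) := by
        refine ENNReal.tsum_le_tsum fun q => mul_le_mul_right ?_ _
        have : Bfull h ω γ q.1 q.2 = ∑ j : Fin k, Bc h ω j γ q.1 q.2 := by
          simp [Bfull, Finset.sum_apply]
        rw [this]
        exact aux_sq_norm_sum_le _
    _ = (k : ℝ≥0∞) * ∑ j : Fin k, ∑' q : (Fin k → Z3) × (Fin k → Z3),
          ENNReal.ofReal (wt α q.1 q.2) * (‖Bc h ω j γ q.1 q.2‖₊ : ℝ≥0∞) ^ 2 := by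
        calc ∑' q : (Fin k → Z3) × (Fin k → Z3),
              ENNReal.ofReal (wt α q.1 q.2) *
                ((k : ℝ≥0∞) * ∑ j : Fin k, (‖Bc h ω j γ q.1 q.2‖₊ : ℝ≥0∞) ^ 2)
            = (k : ℝ≥0∞) * ∑' q : (Fin k → Z3) × (Fin k → Z3),
                ∑ j : Fin k,
                  ENNReal.ofReal (wt α q.1 q.2) * (‖Bc h ω j γ q.1 q.2‖₊ : ℝ≥0∞) ^ 2 := by
              rw [← ENNReal.tsum_mul_left]
              congr 1
              funext q
              simp only [Finset.mul_sum]
              exact Finset.sum_congr rfl fun j _ => by ring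
          _ = (k : ℝ≥0∞) * ∑ j : Fin k, ∑' q : (Fin k → Z3) × (Fin k → Z3),
                ENNReal.ofReal (wt α q.1 q.2) * (‖Bc h ω j γ q.1 q.2‖₊ : ℝ≥0∞) ^ 2 := by
              rw [Summable.tsum_finsetSum (fun (j : Fin k) _ => ENNReal.summable)]

end AuxLemmas2

section AuxLemmas3

variable {Ω : Type} [MeasurableSpace Ω]

lemma aux_measurable_update (n : ℕ) :
    Measurable fun q : (ℕ → Ω) × Ω => Function.update q.1 n q.2 := by
  apply measurable_pi_lambda
  intro i
  by_cases hi : i = n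
  · subst hi
    simpa only [Function.update_self] using measurable_snd
  · simp only [Function.update_of_ne hi]
    exact (measurable_pi_apply i).comp measurable_fst

lemma aux_box (p : Measure Ω) [IsProbabilityMeasure p] (μ : Measure (ℕ → Ω))
    (hProd : ProductLaw p μ) (s : Finset ℕ) (t : ℕ → Set Ω)
    (ht : ∀ i ∈ s, MeasurableSet (t i)) :
    μ ((s : Set ℕ).pi t) = ∏ i ∈ s, p (t i) := by
  have hpi : (s : Set ℕ).pi t = ⋂ i ∈ s, (fun w : ℕ → Ω => w i) ⁻¹' t i := by
    ext w
    simp [Set.mem_pi]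
  rw [hpi, hProd.2.2.measure_inter_preimage_eq_mul s (sets := t) (fun i hi => ht i hi)]
  refine Finset.prod_congr rfl fun i hi => ?_
  rw [← hProd.2.1 i, Measure.map_apply (measurable_pi_apply i) (ht i hi)]

lemma aux_map_update (p : Measure Ω) [IsProbabilityMeasure p] (μ : Measure (ℕ → Ω))
    (hProd : ProductLaw p μ) (n : ℕ) :
    Measure.map (fun q : (ℕ → Ω) × Ω => Function.update q.1 n q.2) (μ.prod p) = μ := by
  classical
  haveI : IsProbabilityMeasure μ := hProd.1
  haveI : IsProbabilityMeasure
      (Measure.map (fun q : (ℕ → Ω) × Ω => Function.update q.1 n q.2) (μ.prod p)) :=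
    Measure.isProbabilityMeasure_map (aux_measurable_update n).aemeasurable
  refine MeasureTheory.ext_of_generate_finite
    (squareCylinders fun _ : ℕ => {s : Set Ω | MeasurableSet s})
    generateFrom_squareCylinders.symm
    (isPiSystem_squareCylinders (fun _ => MeasurableSpace.isPiSystem_measurableSet)
      (fun _ => MeasurableSet.univ)) ?_ (by simp)
  rintro S ⟨s, t, htmem, rfl⟩
  have ht : ∀ i, MeasurableSet (t i) := fun i => htmem i (Set.mem_univ i)
  have hSmeas : MeasurableSet ((s : Set ℕ).pi t) :=
    MeasurableSet.pi (Finset.countable_toSet s) (fun i _ => ht i)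
  rw [Measure.map_apply (aux_measurable_update n) hSmeas,
    aux_box p μ hProd s t (fun i _ => ht i)]
  by_cases hn : n ∈ s
  · have hpre : (fun q : (ℕ → Ω) × Ω => Function.update q.1 n q.2) ⁻¹' ((s : Set ℕ).pi t)
        = ((↑(s.erase n) : Set ℕ).pi t) ×ˢ t n := by
      ext ⟨w, ω⟩
      simp only [Set.mem_preimage, Set.mem_pi, Set.mem_prod, Finset.mem_coe, Finset.mem_erase]
      constructor
      · intro H
        refine ⟨fun i hi => ?_, ?_⟩
        · have := H i hi.2
          rwa [Function.update_of_ne hi.1] at this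
        · have := H n hn
          rwa [Function.update_self] at this
      · rintro ⟨H1, H2⟩ i his
        by_cases hin : i = n
        · subst hin; rwa [Function.update_self]
        · rw [Function.update_of_ne hin]
          exact H1 i ⟨hin, his⟩
    rw [hpre, Measure.prod_prod, aux_box p μ hProd _ t (fun i _ => ht i),
      ← Finset.mul_prod_erase s _ hn, mul_comm]
  · have hpre : (fun q : (ℕ → Ω) × Ω => Function.update q.1 n q.2) ⁻¹' ((s : Set ℕ).pi t)
        = ((s : Set ℕ).pi t) ×ˢ (Set.univ : Set Ω) := by
      ext ⟨w, ω⟩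
      simp only [Set.mem_preimage, Set.mem_pi, Set.mem_prod, Finset.mem_coe, Set.mem_univ,
        and_true]
      constructor
      · intro H i hi
        have hin : i ≠ n := by rintro rfl; exact hn hi
        have := H i hi
        rwa [Function.update_of_ne hin] at this
      · intro H i hi
        have hin : i ≠ n := by rintro rfl; exact hn hi
        rw [Function.update_of_ne hin]
        exact H i hi
    rw [hpre, Measure.prod_prod, measure_univ, mul_one,
      aux_box p μ hProd s t (fun i _ => ht i)]

/-- The squared `l2H` norm. -/
lemma aux_l2H_sq {W : Type} [MeasurableSpace W] (ν : Measure W) (α : ℝ) {k : ℕ}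
    (G : W → DM k) : (l2H ν α G) ^ (2 : ℕ) = ∫⁻ w, hsq α (G w) ∂ν :=
  aux_sqrt_sq _

/-- The main transfer lemma. -/
lemma aux_transfer (p : Measure Ω) [IsProbabilityMeasure p] (μ : Measure (ℕ → Ω))
    (hProd : ProductLaw p μ) (α : ℝ) {k k' : ℕ} (n : ℕ)
    (F : Ω → DM (k + 1) → DM k') (γ : (ℕ → Ω) → DM (k + 1)) (hind : IndepOf μ n γ)
    (c : ℝ≥0∞) (hc : c ≠ ⊤)
    (hF : ∀ γ₀ : DM (k + 1), ∫⁻ ω, hsq α (F ω γ₀) ∂p ≤ c ^ (2 : ℕ) * hsq α γ₀) :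
    l2H μ α (fun w => F (w n) (γ w)) ≤ c * l2H μ α γ := by
  obtain ⟨g, hae, hg⟩ := hind
  haveI : IsProbabilityMeasure μ := hProd.1
  have key : ∫⁻ w, hsq α (F (w n) (γ w)) ∂μ
      ≤ c ^ (2 : ℕ) * ∫⁻ w, hsq α (γ w) ∂μ := by
    have e1 : ∫⁻ w, hsq α (F (w n) (γ w)) ∂μ = ∫⁻ w, hsq α (F (w n) (g w)) ∂μ := by
      apply lintegral_congr_ae
      filter_upwards [hae] with w hw
      rw [hw]
    have e2 : ∫⁻ w, hsq α (γ w) ∂μ = ∫⁻ w, hsq α (g w) ∂μ := by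
      apply lintegral_congr_ae
      filter_upwards [hae] with w hw
      rw [hw]
    rw [e1, e2]
    calc ∫⁻ w, hsq α (F (w n) (g w)) ∂μ
        = ∫⁻ w, hsq α (F (w n) (g w))
            ∂(Measure.map (fun q : (ℕ → Ω) × Ω => Function.update q.1 n q.2) (μ.prod p)) := by
          rw [aux_map_update p μ hProd n]
      _ ≤ ∫⁻ q : (ℕ → Ω) × Ω,
            hsq α (F (Function.update q.1 n q.2 n) (g (Function.update q.1 n q.2)))
            ∂(μ.prod p) := lintegral_map_le _ (fun q : (ℕ → Ω) × Ω => Function.update q.1 n q.2)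
      _ = ∫⁻ q : (ℕ → Ω) × Ω, hsq α (F q.2 (g q.1)) ∂(μ.prod p) := by
          apply lintegral_congr
          intro q
          rw [Function.update_self, hg (Function.update q.1 n q.2) q.1
            (fun m hm => Function.update_of_ne hm _ _)]
      _ ≤ ∫⁻ w, ∫⁻ ω, hsq α (F ω (g w)) ∂p ∂μ :=
          aux_lintegral_prod_le μ p _
      _ ≤ ∫⁻ w, c ^ (2 : ℕ) * hsq α (g w) ∂μ := lintegral_mono fun w => hF (g w)
      _ = c ^ (2 : ℕ) * ∫⁻ w, hsq α (g w) ∂μ :=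
          lintegral_const_mul' _ _ (ENNReal.pow_ne_top hc)
  show (∫⁻ w, hsq α (F (w n) (γ w)) ∂μ) ^ (1 / 2 : ℝ) ≤ c * l2H μ α γ
  calc (∫⁻ w, hsq α (F (w n) (γ w)) ∂μ) ^ (1 / 2 : ℝ)
      ≤ (c ^ (2 : ℕ) * ∫⁻ w, hsq α (γ w) ∂μ) ^ (1 / 2 : ℝ) :=
        ENNReal.rpow_le_rpow key (by norm_num)
    _ = c * l2H μ α γ := by
        rw [ENNReal.mul_rpow_of_nonneg _ _ (by norm_num : (0:ℝ) ≤ 1 / 2), aux_sq_sqrt]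
        rfl

end AuxLemmas3

/-- the randomized collision estimate for data independent of the
randomization parameter ω_{k+1} (Proposition 3.4), and its ℋ_ξ^α consequence. -/
theorem stmt2 [MeasurableSpace Ω] (p : Measure Ω) [IsProbabilityMeasure p]
    (h : Z3 → Ω → ℝ) (hBer : BernoulliFamily p h)
    (μ : Measure (ℕ → Ω)) (hProd : ProductLaw p μ)
    (α : ℝ) (hα : 3 / 4 < α) (C₀ : ℝ) (hC₀ : 0 < C₀)
    (hdet : ∀ (k : ℕ) (j : Fin k) (γ : DM (k + 1)),
      l2H p α (fun ω => Bc h ω j γ) ≤ ENNReal.ofReal C₀ * hnorm α γ) :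
    (∀ (k : ℕ) (j : Fin k) (γ : (ℕ → Ω) → DM (k + 1)), IndepOf μ (k + 1) γ →
        l2H μ α (fun w => Bc h (w (k + 1)) j (γ w)) ≤
            ENNReal.ofReal C₀ * l2H μ α γ ∧
        l2H μ α (fun w => Bfull h (w (k + 1)) (γ w)) ≤
            ENNReal.ofReal C₀ * (k : ℝ≥0∞) * l2H μ α γ) ∧
    (∀ ξ ξ₀ : ℝ, 0 < ξ₀ → ξ₀ < ξ → ∃ C : ℝ, 0 < C ∧
      ∀ Γ : (ℕ → Ω) → Seq,
        (∀ k : ℕ, IndepOf μ (k + 2) (fun w => Γ w (k + 2))) →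
        l2seq μ α ξ₀ (fun w => BhatI h w (Γ w)) ≤
          ENNReal.ofReal C * l2seq μ α ξ Γ) := by
  classical
  haveI : IsProbabilityMeasure μ := hProd.1
  have hh : ∀ ζ, Measurable (h ζ) := hBer.1
  have hdet' : ∀ (k : ℕ) (j : Fin k) (γ₀ : DM (k + 1)),
      ∫⁻ ω, hsq α (Bc h ω j γ₀) ∂p ≤ (ENNReal.ofReal C₀) ^ (2 : ℕ) * hsq α γ₀ := by
    intro k j γ₀
    have h2 : (∫⁻ ω, hsq α (Bc h ω j γ₀) ∂p) = (l2H p α fun ω => Bc h ω j γ₀) ^ (2 : ℕ) :=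
      (aux_l2H_sq p α _).symm
    rw [h2]
    calc (l2H p α fun ω => Bc h ω j γ₀) ^ (2 : ℕ)
        ≤ (ENNReal.ofReal C₀ * hnorm α γ₀) ^ (2 : ℕ) := pow_le_pow_left' (hdet k j γ₀) 2
      _ = (ENNReal.ofReal C₀) ^ (2 : ℕ) * hsq α γ₀ := by
          rw [mul_pow]
          congr 1
          exact aux_sqrt_sq _
  have hdetFull : ∀ (k : ℕ) (γ₀ : DM (k + 1)),
      ∫⁻ ω, hsq α (Bfull h ω γ₀) ∂p
        ≤ (ENNReal.ofReal C₀ * (k : ℝ≥0∞)) ^ (2 : ℕ) * hsq α γ₀ := by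
    intro k γ₀
    calc ∫⁻ ω, hsq α (Bfull h ω γ₀) ∂p
        ≤ ∫⁻ ω, (k : ℝ≥0∞) * ∑ j : Fin k, hsq α (Bc h ω j γ₀) ∂p :=
          lintegral_mono fun ω => aux_hsq_Bfull_le h ω α γ₀
      _ = (k : ℝ≥0∞) * ∑ j : Fin k, ∫⁻ ω, hsq α (Bc h ω j γ₀) ∂p := by
          rw [lintegral_const_mul' _ _ (ENNReal.natCast_ne_top k),
            lintegral_finset_sum _ (fun j _ => aux_measurable_hsq_Bc h hh α j γ₀)]
      _ ≤ (k : ℝ≥0∞) * ∑ j : Fin k, (ENNReal.ofReal C₀) ^ (2 : ℕ) * hsq α γ₀ :=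
          mul_le_mul_right (Finset.sum_le_sum fun j _ => hdet' k j γ₀) _
      _ = (ENNReal.ofReal C₀ * (k : ℝ≥0∞)) ^ (2 : ℕ) * hsq α γ₀ := by
          rw [Finset.sum_const, Finset.card_univ, Fintype.card_fin, nsmul_eq_mul, mul_pow]
          ring
  have main : ∀ (k : ℕ) (j : Fin k) (γ : (ℕ → Ω) → DM (k + 1)), IndepOf μ (k + 1) γ →
      (l2H μ α (fun w => Bc h (w (k + 1)) j (γ w)) ≤ ENNReal.ofReal C₀ * l2H μ α γ ∧
       l2H μ α (fun w => Bfull h (w (k + 1)) (γ w)) ≤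
         ENNReal.ofReal C₀ * (k : ℝ≥0∞) * l2H μ α γ) := by
    intro k j γ hind
    constructor
    · exact aux_transfer p μ hProd α (k + 1) (fun ω γ₀ => Bc h ω j γ₀) γ hind
        (ENNReal.ofReal C₀) ENNReal.ofReal_ne_top (fun γ₀ => hdet' k j γ₀)
    · exact aux_transfer p μ hProd α (k + 1) (fun ω γ₀ => Bfull h ω γ₀) γ hind
        (ENNReal.ofReal C₀ * (k : ℝ≥0∞))
        (ENNReal.mul_ne_top ENNReal.ofReal_ne_top (ENNReal.natCast_ne_top k))
        (fun γ₀ => hdetFull k γ₀)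
  refine ⟨main, ?_⟩
  intro ξ ξ₀ hξ₀ hlt
  have hξ : 0 < ξ := hξ₀.trans hlt
  set r : ℝ := ξ₀ / ξ with hrdef
  have hr0 : 0 < r := div_pos hξ₀ hξ
  have hr1 : r < 1 := (div_lt_one hξ).2 hlt
  have h1r : 0 < 1 - r := by linarith
  have hCpos : 0 < C₀ * (r / ((1 - r) ^ 2 * ξ)) :=
    mul_pos hC₀ (div_pos hr0 (mul_pos (pow_pos h1r 2) hξ))
  refine ⟨C₀ * (r / ((1 - r) ^ 2 * ξ)), hCpos, ?_⟩
  intro Γ hΓ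
  set C : ℝ := C₀ * (r / ((1 - r) ^ 2 * ξ)) with hCdef
  have hsum := hasSum_coe_mul_geometric_of_norm_lt_one
    (r := r) (by rw [Real.norm_eq_abs, abs_of_pos hr0]; exact hr1)
  have key : ∀ m : ℕ, (m : ℝ) * r ^ m ≤ r / (1 - r) ^ 2 :=
    fun m => le_hasSum hsum m (fun j _ => by positivity)
  have hreal : ∀ k : ℕ, ξ₀ ^ (k + 1) * (C₀ * ((k + 1 : ℕ) : ℝ)) ≤ C * ξ ^ (k + 2) := by
    intro k
    have hξ₀eq : ξ₀ = r * ξ := by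
      rw [hrdef]
      field_simp
    have hk := key (k + 1)
    calc ξ₀ ^ (k + 1) * (C₀ * ((k + 1 : ℕ) : ℝ))
        = C₀ * (((k + 1 : ℕ) : ℝ) * r ^ (k + 1)) * ξ ^ (k + 1) := by
          rw [hξ₀eq, mul_pow]
          push_cast
          ring
      _ ≤ C₀ * (r / (1 - r) ^ 2) * ξ ^ (k + 1) :=
          mul_le_mul_of_nonneg_right (mul_le_mul_of_nonneg_left hk hC₀.le)
            (pow_nonneg hξ.le _)
      _ = C * ξ ^ (k + 2) := by
          rw [hCdef, pow_succ ξ (k + 1)]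
          field_simp
  have hterm : ∀ k : ℕ,
      ENNReal.ofReal (ξ₀ ^ (k + 1)) * l2H μ α (fun w => BhatI h w (Γ w) (k + 1))
        ≤ ENNReal.ofReal C *
          (ENNReal.ofReal (ξ ^ ((k + 1) + 1)) * l2H μ α (fun w => Γ w ((k + 1) + 1))) := by
    intro k
    have hb := (main (k + 1) ⟨0, Nat.succ_pos k⟩ (fun w => Γ w (k + 2)) (hΓ k)).2
    have hscal : ENNReal.ofReal (ξ₀ ^ (k + 1)) * (ENNReal.ofReal C₀ * ((k + 1 : ℕ) : ℝ≥0∞))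
        ≤ ENNReal.ofReal C * ENNReal.ofReal (ξ ^ (k + 2)) := by
      rw [← ENNReal.ofReal_natCast (k + 1), ← ENNReal.ofReal_mul hC₀.le,
        ← ENNReal.ofReal_mul (by positivity), ← ENNReal.ofReal_mul hCpos.le]
      exact ENNReal.ofReal_le_ofReal (hreal k)
    calc ENNReal.ofReal (ξ₀ ^ (k + 1)) * l2H μ α (fun w => BhatI h w (Γ w) (k + 1))
        ≤ ENNReal.ofReal (ξ₀ ^ (k + 1)) *
            (ENNReal.ofReal C₀ * ((k + 1 : ℕ) : ℝ≥0∞) *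
              l2H μ α (fun w => Γ w (k + 2))) := mul_le_mul_right hb _
      _ = (ENNReal.ofReal (ξ₀ ^ (k + 1)) * (ENNReal.ofReal C₀ * ((k + 1 : ℕ) : ℝ≥0∞))) *
            l2H μ α (fun w => Γ w (k + 2)) := by ring
      _ ≤ (ENNReal.ofReal C * ENNReal.ofReal (ξ ^ (k + 2))) *
            l2H μ α (fun w => Γ w (k + 2)) := mul_le_mul_left hscal _
      _ = ENNReal.ofReal C *
            (ENNReal.ofReal (ξ ^ ((k + 1) + 1)) * l2H μ α (fun w => Γ w ((k + 1) + 1))) := by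
          ring
  calc l2seq μ α ξ₀ (fun w => BhatI h w (Γ w))
      = ∑' k : ℕ, ENNReal.ofReal (ξ₀ ^ (k + 1)) *
          l2H μ α (fun w => BhatI h w (Γ w) (k + 1)) := rfl
    _ ≤ ∑' k : ℕ, ENNReal.ofReal C *
          (ENNReal.ofReal (ξ ^ ((k + 1) + 1)) * l2H μ α (fun w => Γ w ((k + 1) + 1))) :=
        ENNReal.tsum_le_tsum hterm
    _ = ENNReal.ofReal C * ∑' k : ℕ,
          ENNReal.ofReal (ξ ^ ((k + 1) + 1)) * l2H μ α (fun w => Γ w ((k + 1) + 1)) :=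
        ENNReal.tsum_mul_left
    _ ≤ ENNReal.ofReal C * ∑' m : ℕ,
          ENNReal.ofReal (ξ ^ (m + 1)) * l2H μ α (fun w => Γ w (m + 1)) :=
        mul_le_mul_right
          (tsum_comp_le_tsum_of_injective Nat.succ_injective
            (fun m => ENNReal.ofReal (ξ ^ (m + 1)) * l2H μ α (fun w => Γ w (m + 1)))) _
    _ = ENNReal.ofReal C * l2seq μ α ξ Γ := rfl


end GP

end
end

section
/- Fix β₀ > β > 0. There exist constants C = C(β, β₀) > 0 and r = r(β, β₀) > 0, independent of k, such that for every k ∈ ℕ, every density matrix σ₀^{(k)} of order k with ‖σ₀^{(k)}‖_{H^{β₀}(Λ^k×Λ^k)} < ∞, every t ∈ ℝ and every δ > 0: ‖(U^{(k)}(t+δ) − U^{(k)}(t)) σ₀^{(k)}‖_{H^β(Λ^k×Λ^k)} ≤ C δ^r · ‖σ₀^{(k)}‖_{H^{β₀}(Λ^k×Λ^k)}. -/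
open MeasureTheory ENNReal

noncomputable section

namespace GP

variable {Ω W : Type}

lemma nsq_nonneg (ζ : Z3) : (0:ℤ) ≤ nsq ζ := Finset.sum_nonneg fun i _ => sq_nonneg _

lemma one_le_jb (ζ : Z3) : 1 ≤ jb ζ := by
  rw [jb, Real.one_le_sqrt]
  · have := nsq_nonneg ζ
    have : (0:ℝ) ≤ (nsq ζ : ℝ) := by exact_mod_cast this
    linarith

lemma jb_pos (ζ : Z3) : 0 < jb ζ := lt_of_lt_of_le one_pos (one_le_jb ζ)

lemma jb_sq (ζ : Z3) : jb ζ ^ 2 = 1 + (nsq ζ : ℝ) := by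
  rw [jb, Real.sq_sqrt]
  have : (0:ℝ) ≤ (nsq ζ : ℝ) := by exact_mod_cast nsq_nonneg ζ
  linarith

/-- The combined bracket product. -/
def Qb {k : ℕ} (a b : Fin k → Z3) : ℝ := ∏ j, jb (a j) * jb (b j)

lemma one_le_jb_mul (x y : Z3) : 1 ≤ jb x * jb y := by
  nlinarith [one_le_jb x, one_le_jb y]

lemma one_le_prod_real {ι : Type*} (s : Finset ι) (f : ι → ℝ)
    (hf : ∀ i ∈ s, 1 ≤ f i) : 1 ≤ ∏ i ∈ s, f i := by
  classical
  induction s using Finset.induction_on with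
  | empty => simp
  | @insert c s' hns ih =>
    rw [Finset.prod_insert hns]
    have h1 := hf c (Finset.mem_insert_self c s')
    have h2 := ih fun i hi => hf i (Finset.mem_insert_of_mem hi)
    nlinarith

lemma one_le_Qb {k : ℕ} (a b : Fin k → Z3) : 1 ≤ Qb a b :=
  one_le_prod_real _ _ fun j _ => one_le_jb_mul _ _

lemma Qb_pos {k : ℕ} (a b : Fin k → Z3) : 0 < Qb a b :=
  lt_of_lt_of_le one_pos (one_le_Qb a b)

lemma wt_eq (α : ℝ) {k : ℕ} (a b : Fin k → Z3) : wt α a b = Qb a b ^ (2*α) := by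
  rw [wt, Qb, ← Real.finset_prod_rpow _ _ (fun j _ => mul_nonneg (jb_pos _).le (jb_pos _).le) (2*α)]
  exact Finset.prod_congr rfl fun j _ =>
    (Real.mul_rpow (jb_pos _).le (jb_pos _).le).symm

lemma sum_sub_one_le_prod {ι : Type*} (s : Finset ι) (f : ι → ℝ)
    (hf : ∀ i ∈ s, 1 ≤ f i) : ∑ i ∈ s, (f i - 1) ≤ ∏ i ∈ s, f i := by
  classical
  induction s using Finset.induction_on with
  | empty => simp
  | @insert c s' hns ih =>
    rw [Finset.sum_insert hns, Finset.prod_insert hns]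
    have h1 : 1 ≤ f c := hf c (Finset.mem_insert_self c s')
    have h2 : ∀ i ∈ s', 1 ≤ f i := fun i hi => hf i (Finset.mem_insert_of_mem hi)
    have h3 := ih h2
    have h4 : (1:ℝ) ≤ ∏ i ∈ s', f i := one_le_prod_real _ _ h2
    nlinarith

lemma lam_le {k : ℕ} (a b : Fin k → Z3) :
    |(((∑ j, nsq (a j)) - ∑ j, nsq (b j) : ℤ) : ℝ)| ≤ Qb a b ^ ((2:ℝ)) := by
  have h1 : ∀ j, ((nsq (a j) : ℝ) + (nsq (b j) : ℝ)) ≤ jb (a j) ^2 * jb (b j)^2 - 1 := by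
    intro j
    have ha := jb_sq (a j); have hb := jb_sq (b j)
    have hA : (0:ℝ) ≤ (nsq (a j) : ℝ) := by exact_mod_cast nsq_nonneg _
    have hB : (0:ℝ) ≤ (nsq (b j) : ℝ) := by exact_mod_cast nsq_nonneg _
    nlinarith [mul_nonneg hA hB]
  have h2 : ∑ j, ((nsq (a j) : ℝ) + (nsq (b j) : ℝ)) ≤ ∏ j, (jb (a j) * jb (b j))^2 := by
    calc ∑ j, ((nsq (a j) : ℝ) + (nsq (b j) : ℝ))
        ≤ ∑ j, ((jb (a j) * jb (b j))^2 - 1) := by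
          apply Finset.sum_le_sum; intro j _
          have := h1 j; nlinarith [h1 j, one_le_jb_mul (a j) (b j)]
      _ ≤ ∏ j, (jb (a j) * jb (b j))^2 :=
          sum_sub_one_le_prod _ _ fun j _ => by nlinarith [one_le_jb_mul (a j) (b j)]
  have h3 : (∏ j, (jb (a j) * jb (b j))^2) = Qb a b ^ ((2:ℝ)) := by
    rw [Qb, Finset.prod_pow, ← Real.rpow_natCast (∏ j, jb (a j) * jb (b j)) 2]
    norm_num
  have hA : (0:ℝ) ≤ ∑ j, (nsq (a j) : ℝ) := Finset.sum_nonneg fun j _ => by exact_mod_cast nsq_nonneg _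
  have hB : (0:ℝ) ≤ ∑ j, (nsq (b j) : ℝ) := Finset.sum_nonneg fun j _ => by exact_mod_cast nsq_nonneg _
  have h4 : (∑ j, (nsq (a j) : ℝ)) + ∑ j, (nsq (b j) : ℝ) ≤ Qb a b ^ ((2:ℝ)) := by
    rw [← h3, ← Finset.sum_add_distrib]; exact h2
  rw [abs_le]
  push_cast
  constructor <;> linarith
lemma norm_exp_I_sub_one_le (θ : ℝ) :
    ‖Complex.exp ((θ:ℂ) * Complex.I) - 1‖ ≤ 2 * min 1 |θ| := by
  rcases le_total |θ| 1 with h | h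
  · rw [min_eq_right h]
    have habs : ‖((θ:ℂ) * Complex.I)‖ = |θ| := by
      simp
    have := Complex.norm_exp_sub_one_le (x := (θ:ℂ) * Complex.I) (by rw [habs]; exact h)
    rw [habs] at this
    simpa using this
  · rw [min_eq_left h]
    have h1 : ‖Complex.exp ((θ:ℂ) * Complex.I)‖ = 1 := by
      simpa using Complex.norm_exp_ofReal_mul_I θ
    calc ‖Complex.exp ((θ:ℂ) * Complex.I) - 1‖
        ≤ ‖Complex.exp ((θ:ℂ) * Complex.I)‖ + ‖(1:ℂ)‖ := norm_sub_le _ _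
      _ = 2 * 1 := by rw [h1]; norm_num

lemma min_one_le_rpow {x r : ℝ} (hx : 0 ≤ x) (hr0 : 0 < r) (hr1 : r ≤ 1) :
    min 1 x ≤ x ^ r := by
  rcases eq_or_lt_of_le hx with h0 | h0
  · rw [← h0, Real.zero_rpow hr0.ne']
    simp
  rcases le_total x 1 with h | h
  · rw [min_eq_right h]
    calc x = x ^ (1:ℝ) := (Real.rpow_one x).symm
      _ ≤ x ^ r := Real.rpow_le_rpow_of_exponent_ge h0 h hr1
  · rw [min_eq_left h]
    exact Real.one_le_rpow h hr0.le

/-- Lemma 3.19: time-difference estimate for the free evolution. -/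
theorem stmt10 :
    ∀ β β₀ : ℝ, 0 < β → β < β₀ →
      ∃ C : ℝ, 0 < C ∧ ∃ r : ℝ, 0 < r ∧
        ∀ (k : ℕ) (σ0 : DM k), hnorm β₀ σ0 ≠ ⊤ →
          ∀ (t δ : ℝ), 0 < δ →
            hnorm β (freeEv (t + δ) σ0 - freeEv t σ0) ≤
              ENNReal.ofReal (C * δ ^ r) * hnorm β₀ σ0 := by
  intro β β₀ hβ hββ
  set r : ℝ := min 1 ((β₀ - β)/2) with hrdef
  have hr0 : 0 < r := lt_min one_pos (by linarith)
  have hr1 : r ≤ 1 := min_le_left _ _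
  have hr2 : r ≤ (β₀ - β)/2 := min_le_right _ _
  refine ⟨2, two_pos, r, hr0, fun k σ0 _ t δ hδ => ?_⟩
  have hδr : (0:ℝ) ≤ δ ^ r := Real.rpow_nonneg hδ.le r
  have hkey : hsq β (freeEv (t + δ) σ0 - freeEv t σ0) ≤
      ENNReal.ofReal ((2 * δ ^ r)^2) * hsq β₀ σ0 := by
    rw [hsq, hsq, ← ENNReal.tsum_mul_left]
    refine ENNReal.tsum_le_tsum fun q => ?_
    obtain ⟨a, b⟩ := q
    simp only
    set n : ℤ := (∑ j, nsq (a j)) - ∑ j, nsq (b j) with hn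
    have hQ1 : 1 ≤ Qb a b := one_le_Qb a b
    have hQ0 : 0 < Qb a b := Qb_pos a b
    -- pointwise factorization of the difference
    have hDab : ‖(freeEv (t + δ) σ0 - freeEv t σ0) a b‖
        = ‖Complex.exp (((-(δ * (n:ℝ)) : ℝ) : ℂ) * Complex.I) - 1‖ * ‖σ0 a b‖ := by
      have hfact : (freeEv (t + δ) σ0 - freeEv t σ0) a b
          = Complex.exp (((-(t * (n:ℝ)) : ℝ) : ℂ) * Complex.I) *
            ((Complex.exp (((-(δ * (n:ℝ)) : ℝ) : ℂ) * Complex.I) - 1) * σ0 a b) := by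
        simp only [Pi.sub_apply, freeEv, ← hn]
        have hsplit : -(Complex.I * ((t + δ : ℝ) : ℂ) * (n : ℂ))
            = ((-(t * (n:ℝ)) : ℝ) : ℂ) * Complex.I
              + ((-(δ * (n:ℝ)) : ℝ) : ℂ) * Complex.I := by push_cast; ring
        have h2 : -(Complex.I * ((t : ℝ) : ℂ) * (n : ℂ))
            = ((-(t * (n:ℝ)) : ℝ) : ℂ) * Complex.I := by push_cast; ring
        rw [hsplit, Complex.exp_add, h2]
        ring
      rw [hfact, norm_mul, norm_mul]
      have h1 : ‖Complex.exp (((-(t * (n:ℝ)) : ℝ) : ℂ) * Complex.I)‖ = 1 := by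
        simpa using Complex.norm_exp_ofReal_mul_I (-(t * (n:ℝ)))
      rw [h1, one_mul]
    -- bound on the phase difference
    have hE : ‖Complex.exp (((-(δ * (n:ℝ)) : ℝ) : ℂ) * Complex.I) - 1‖
        ≤ 2 * δ ^ r * Qb a b ^ (2 * r) := by
      calc ‖Complex.exp (((-(δ * (n:ℝ)) : ℝ) : ℂ) * Complex.I) - 1‖
          ≤ 2 * min 1 |(-(δ * (n:ℝ)))| := norm_exp_I_sub_one_le _
        _ ≤ 2 * |δ * (n:ℝ)| ^ r := by
            rw [abs_neg]
            exact mul_le_mul_of_nonneg_left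
              (min_one_le_rpow (abs_nonneg _) hr0 hr1) (by norm_num)
        _ = 2 * (δ ^ r * |(n:ℝ)| ^ r) := by
            rw [abs_mul, abs_of_pos hδ, Real.mul_rpow hδ.le (abs_nonneg _)]
        _ ≤ 2 * (δ ^ r * (Qb a b ^ ((2:ℝ))) ^ r) := by
            have : |(n:ℝ)| ^ r ≤ (Qb a b ^ ((2:ℝ))) ^ r :=
              Real.rpow_le_rpow (abs_nonneg _) (hn ▸ lam_le a b) hr0.le
            nlinarith [Real.rpow_nonneg (abs_nonneg ((n:ℝ))) r, hδr,
              mul_le_mul_of_nonneg_left this hδr]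
        _ = 2 * δ ^ r * Qb a b ^ (2 * r) := by
            rw [← Real.rpow_mul hQ0.le]; ring
    -- weight inequality
    have hwt : wt β a b * (Qb a b ^ (2 * r))^2 ≤ wt β₀ a b := by
      rw [wt_eq, wt_eq]
      have hsq2 : (Qb a b ^ (2 * r))^2 = Qb a b ^ ((2 * r) * 2) := by
        rw [← Real.rpow_natCast (Qb a b ^ (2*r)) 2, ← Real.rpow_mul hQ0.le]
        norm_num
      rw [hsq2, ← Real.rpow_add hQ0]
      exact Real.rpow_le_rpow_of_exponent_le hQ1 (by linarith)
    have hw0 : 0 ≤ wt β a b := by rw [wt_eq]; positivity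
    have hw00 : 0 ≤ wt β₀ a b := by rw [wt_eq]; positivity
    -- real inequality
    have hreal : wt β a b * ‖(freeEv (t + δ) σ0 - freeEv t σ0) a b‖ ^ 2
        ≤ (2 * δ ^ r)^2 * (wt β₀ a b * ‖σ0 a b‖ ^ 2) := by
      rw [hDab]
      have hEn : (0:ℝ) ≤ ‖Complex.exp (((-(δ * (n:ℝ)) : ℝ) : ℂ) * Complex.I) - 1‖ :=
        norm_nonneg _
      calc wt β a b * (‖Complex.exp (((-(δ * (n:ℝ)) : ℝ) : ℂ) * Complex.I) - 1‖ * ‖σ0 a b‖) ^ 2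
          ≤ wt β a b * ((2 * δ ^ r * Qb a b ^ (2 * r)) * ‖σ0 a b‖) ^ 2 := by
            apply mul_le_mul_of_nonneg_left _ hw0
            apply pow_le_pow_left₀ (mul_nonneg hEn (norm_nonneg _))
            exact mul_le_mul_of_nonneg_right hE (norm_nonneg _)
        _ = (2 * δ ^ r)^2 * ((wt β a b * (Qb a b ^ (2 * r))^2) * ‖σ0 a b‖ ^ 2) := by ring
        _ ≤ (2 * δ ^ r)^2 * (wt β₀ a b * ‖σ0 a b‖ ^ 2) := by
            apply mul_le_mul_of_nonneg_left _ (by positivity)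
            exact mul_le_mul_of_nonneg_right hwt (sq_nonneg _)
    -- pass to ℝ≥0∞
    have hcast : ∀ (x : ℂ), ((‖x‖₊ : ℝ≥0∞))^2 = ENNReal.ofReal (‖x‖ ^ 2) := fun x => by
      rw [ENNReal.ofReal_pow (norm_nonneg x)]
      congr 1
      exact (ENNReal.ofReal_eq_coe_nnreal (norm_nonneg x)).symm
    rw [hcast, hcast, ← ENNReal.ofReal_mul hw0, ← ENNReal.ofReal_mul hw00,
      ← ENNReal.ofReal_mul (by positivity)]
    exact ENNReal.ofReal_le_ofReal hreal
  -- conclude via square roots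
  rw [hnorm, hnorm]
  calc hsq β (freeEv (t + δ) σ0 - freeEv t σ0) ^ (1/2 : ℝ)
      ≤ (ENNReal.ofReal ((2 * δ ^ r)^2) * hsq β₀ σ0) ^ (1/2 : ℝ) :=
        ENNReal.rpow_le_rpow hkey (by norm_num)
    _ = ENNReal.ofReal ((2 * δ ^ r)^2) ^ (1/2 : ℝ) * hsq β₀ σ0 ^ (1/2 : ℝ) :=
        ENNReal.mul_rpow_of_nonneg _ _ (by norm_num)
    _ = ENNReal.ofReal (2 * δ ^ r) * hsq β₀ σ0 ^ (1/2 : ℝ) := by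
        rw [ENNReal.ofReal_rpow_of_nonneg (by positivity) (by norm_num)]
        congr 2
        rw [← Real.sqrt_eq_rpow, Real.sqrt_sq_eq_abs, abs_of_nonneg (by positivity)]


end GP

end
end
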